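/- Let A = (ℤ/2ℤ) × (ℤ ∗ ℤ/2ℤ) with the ℤ/2ℤ factor generated by α, let B = (ℤ/2ℤ) × (ℤ/2ℤ) with first factor generated by α, and let C = ℤ/2ℤ = ⟨α⟩ embedded in A and B as the first factor. Then the amalgamated free product A ∗_C B is isomorphic to (ℤ/2ℤ) × (ℤ ∗ ℤ/2ℤ ∗ ℤ/2ℤ). -/

import Mathlib

set_option maxHeartbeats 1000000

open Monoid

abbrev M2 := Multiplicative (ZMod 2)
abbrev MZ := Multiplicative ℤ

/-- `A = (ℤ/2) × (ℤ ∗ ℤ/2)`. -/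
abbrev A := M2 × Coprod MZ M2
/-- `B = (ℤ/2) × (ℤ/2)`. -/
abbrev B := M2 × M2

/-- The family `{A, B}` indexed by `Bool`. -/
def Gfam : Bool → Type := fun b => bif b then A else B

instance : ∀ b, Group (Gfam b) := fun b => by
  cases b
  · exact inferInstanceAs (Group B)
  · exact inferInstanceAs (Group A)

/-- The first-factor inclusions `C = ℤ/2 ↪ A` and `C ↪ B`. -/
def φ : ∀ b, M2 →* Gfam b := fun b =>
  match b with
  | true => MonoidHom.inl M2 (Coprod MZ M2)
  | false => MonoidHom.inl M2 M2

/-- The target free factor `ℤ ∗ ℤ/2 ∗ ℤ/2`. -/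
abbrev K := Coprod MZ (Coprod M2 M2)

/-- `ℤ ∗ ℤ/2 ↪ K`. -/
def jA : Coprod MZ M2 →* K :=
  Coprod.lift (P := K) Coprod.inl (Coprod.inr.comp Coprod.inl)

/-- The family of maps into `M2 × K`. -/
def fam : ∀ b, Gfam b →* M2 × K := fun b =>
  match b with
  | true => (MonoidHom.id M2).prodMap jA
  | false => (MonoidHom.id M2).prodMap ((Coprod.inr (N := Coprod M2 M2)).comp Coprod.inr)

lemma compatA :
    (((MonoidHom.id M2).prodMap jA).comp (MonoidHom.inl M2 (Coprod MZ M2)) :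
      M2 →* M2 × K) = MonoidHom.inl M2 K := by
  refine MonoidHom.ext fun m => ?_
  simp [jA, Prod.ext_iff]

lemma compatB :
    (((MonoidHom.id M2).prodMap
        ((Coprod.inr (N := Coprod M2 M2)).comp Coprod.inr)).comp
      (MonoidHom.inl M2 M2) : M2 →* M2 × K) = MonoidHom.inl M2 K := by
  refine MonoidHom.ext fun m => ?_
  simp [Prod.ext_iff]

lemma compat : ∀ b, (fam b).comp (φ b) = MonoidHom.inl M2 K := by
  intro b
  cases b
  · exact compatB
  · exact compatA

/-- The forward map. -/
def f : PushoutI φ →* M2 × K := PushoutI.lift (K := M2 × K) fam (MonoidHom.inl M2 K) compat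

/-- The map from `K` into the pushout. -/
def gK : K →* PushoutI φ :=
  Coprod.lift
    ((PushoutI.of (φ := φ) true).comp
      ((MonoidHom.inr M2 (Coprod MZ M2)).comp Coprod.inl))
    (Coprod.lift
      ((PushoutI.of (φ := φ) true).comp
        ((MonoidHom.inr M2 (Coprod MZ M2)).comp Coprod.inr))
      ((PushoutI.of (φ := φ) false).comp (MonoidHom.inr M2 M2)))

lemma comm_base (m : M2) (x : PushoutI φ) : Commute (PushoutI.base φ m) x := by
  induction x using PushoutI.induction_on with
  | of i g =>
    rw [← PushoutI.of_apply_eq_base (φ := φ) i m]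
    refine Commute.map ?_ (PushoutI.of (φ := φ) i)
    cases i
    · show Commute ((MonoidHom.inl M2 M2) m) _
      show _ * _ = _ * _
      refine Prod.ext ?_ ?_ <;>
        exact mul_comm _ _
    · show Commute ((MonoidHom.inl M2 (Coprod MZ M2)) m) _
      show _ * _ = _ * _
      refine Prod.ext (mul_comm _ _) ?_
      show (1 : Coprod MZ M2) * _ = _ * 1
      rw [one_mul, mul_one]
  | base h =>
    show _ * _ = _ * _
    rw [← map_mul, ← map_mul, mul_comm]
  | mul x y hx hy => exact hx.mul_right hy

/-- The inverse map. -/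
def g : M2 × K →* PushoutI φ :=
  (PushoutI.base φ).noncommCoprod gK fun m k => comm_base m (gK k)

lemma hofA (p : A) : f (PushoutI.of (φ := φ) true p) = (p.1, jA p.2) := by
  have h := PushoutI.lift_of (φ := φ) (K := M2 × K) fam (MonoidHom.inl M2 K) compat
    (i := true) p
  exact h

lemma hofB (p : B) :
    f (PushoutI.of (φ := φ) false p) = (p.1, Coprod.inr (Coprod.inr p.2)) := by
  have h := PushoutI.lift_of (φ := φ) (K := M2 × K) fam (MonoidHom.inl M2 K) compat
    (i := false) p
  exact h

lemma gK_inl (x : MZ) :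
    gK (Coprod.inl x) = PushoutI.of (φ := φ) true ((1 : M2), Coprod.inl x) := by
  simp only [gK, Coprod.lift_apply_inl, MonoidHom.comp_apply]
  rfl

lemma gK_inr_inl (x : M2) :
    gK (Coprod.inr (Coprod.inl x)) =
      PushoutI.of (φ := φ) true ((1 : M2), Coprod.inr x) := by
  simp only [gK, Coprod.lift_apply_inl, Coprod.lift_apply_inr,
    MonoidHom.comp_apply]
  rfl

lemma gK_inr_inr (x : M2) :
    gK (Coprod.inr (Coprod.inr x)) =
      PushoutI.of (φ := φ) false ((1 : M2), x) := by
  simp only [gK, Coprod.lift_apply_inr, MonoidHom.comp_apply]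
  rfl

lemma hKA : gK.comp jA =
    (PushoutI.of (φ := φ) true).comp (MonoidHom.inr M2 (Coprod MZ M2)) := by
  refine Coprod.hom_ext ?_ ?_ <;>
    refine MonoidHom.ext fun x => ?_ <;>
      · simp only [gK, jA, MonoidHom.comp_apply, Coprod.lift_apply_inl,
          Coprod.lift_apply_inr]
        rfl

lemma hgf : g.comp f = MonoidHom.id (PushoutI φ) := by
  refine PushoutI.hom_ext_nonempty fun i => ?_
  cases i
  · refine MonoidHom.ext fun x => ?_
    show g (f (PushoutI.of (φ := φ) false x)) = PushoutI.of (φ := φ) false x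
    rw [show f (PushoutI.of (φ := φ) false x) = _ from hofB x]
    show PushoutI.base φ x.1 * gK (Coprod.inr (Coprod.inr x.2)) =
      PushoutI.of (φ := φ) false x
    rw [gK_inr_inr, ← PushoutI.of_apply_eq_base (φ := φ) false]
    refine (map_mul (PushoutI.of (φ := φ) false) _ _).symm.trans ?_
    congr 1
    show ((x.1, (1 : M2)) : B) * ((1 : M2), x.2) = x
    exact Prod.ext (mul_one x.1) (one_mul x.2)
  · refine MonoidHom.ext fun x => ?_
    show g (f (PushoutI.of (φ := φ) true x)) = PushoutI.of (φ := φ) true x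
    rw [show f (PushoutI.of (φ := φ) true x) = _ from hofA x]
    show PushoutI.base φ x.1 * gK (jA x.2) = PushoutI.of (φ := φ) true x
    have hc : gK (jA x.2) = PushoutI.of (φ := φ) true ((1 : M2), x.2) :=
      DFunLike.congr_fun hKA x.2
    rw [hc, ← PushoutI.of_apply_eq_base (φ := φ) true]
    refine (map_mul (PushoutI.of (φ := φ) true) _ _).symm.trans ?_
    congr 1
    show ((x.1, (1 : Coprod MZ M2)) : A) * ((1 : M2), x.2) = x
    exact Prod.ext (mul_one x.1) (one_mul x.2)

lemma hfgK : f.comp gK = MonoidHom.inr M2 K := by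
  refine Coprod.hom_ext ?_ (Coprod.hom_ext ?_ ?_) <;>
    refine MonoidHom.ext fun x => ?_
  · show f (gK (Coprod.inl x)) = MonoidHom.inr M2 K (Coprod.inl x)
    rw [gK_inl, hofA]
    simp [jA, Prod.ext_iff]
  · show f (gK (Coprod.inr (Coprod.inl x))) =
      MonoidHom.inr M2 K (Coprod.inr (Coprod.inl x))
    rw [gK_inr_inl, hofA]
    simp [jA, Prod.ext_iff]
  · show f (gK (Coprod.inr (Coprod.inr x))) =
      MonoidHom.inr M2 K (Coprod.inr (Coprod.inr x))
    rw [gK_inr_inr, hofB]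
    simp [Prod.ext_iff]

lemma hfg : f.comp g = MonoidHom.id (M2 × K) := by
  refine MonoidHom.ext fun p => ?_
  obtain ⟨m, k⟩ := p
  show f (PushoutI.base φ m * gK k) = _
  rw [map_mul]
  have h1 : f (PushoutI.base φ m) = (m, 1) := by
    have h := PushoutI.lift_base (φ := φ) (K := M2 × K) fam (MonoidHom.inl M2 K) compat m
    exact h
  have h2 : f (gK k) = (1, k) := DFunLike.congr_fun hfgK k
  rw [h1, h2]
  exact Prod.ext (mul_one m) (one_mul k)

/-- The amalgamated free product `A ∗_C B` is `(ℤ/2) × (ℤ ∗ ℤ/2 ∗ ℤ/2)`. -/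
theorem amalgam_iso :
    Nonempty (Monoid.PushoutI φ ≃* M2 × Coprod MZ (Coprod M2 M2)) :=
  ⟨MonoidHom.toMulEquiv f g hgf hfg⟩
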